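/- Let E be a constant real 3×3 matrix satisfying E_min|X|² ≤ XᵀEX for all X ∈ ℝ³ with some E_min > 0, let α, β, ε > 0, and let f : ℝ³ → ℝ be a square-integrable continuous function. Suppose φ_t, φ_c : ℝ³ → ℝ are twice continuously differentiable with compact support and satisfy on ℝ³: −∇·(E∇φ_t) + (α²/ε²)(φ_t − φ_c) = −(α²/ε²) f and −∇·(E∇φ_c) − (β²/ε²)(φ_t − φ_c) = (β²/ε²) f. Then β² E_min ∫_{ℝ³} |∇φ_t|² dx + α² E_min ∫_{ℝ³} |∇φ_c|² dx ≤ (α² β²/ε²) ‖f‖²_{L²(ℝ³)}. -/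

import Mathlib

open Matrix MeasureTheory

/-- Partial derivative `∂_i u` of a function `u : ℝ³ → ℝ`. -/
noncomputable def pd3 (u : (Fin 3 → ℝ) → ℝ) (i : Fin 3) (x : Fin 3 → ℝ) : ℝ :=
  fderiv ℝ u x (Pi.single i 1)

/-- The operator `∇·(E∇u) = ∑_{i,j} E i j * ∂_i ∂_j u` for a constant matrix `E`. -/
noncomputable def divEgrad (E : Matrix (Fin 3) (Fin 3) ℝ) (u : (Fin 3 → ℝ) → ℝ)
    (x : Fin 3 → ℝ) : ℝ :=
  ∑ i, ∑ j, E i j * pd3 (pd3 u j) i x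

lemma pd3_cont {u : (Fin 3 → ℝ) → ℝ} (hu : ContDiff ℝ 1 u) (i : Fin 3) :
    Continuous (pd3 u i) :=
  (hu.continuous_fderiv one_ne_zero).clm_apply continuous_const

lemma pd3_cs {u : (Fin 3 → ℝ) → ℝ} (hu : HasCompactSupport u) (i : Fin 3) :
    HasCompactSupport (pd3 u i) :=
  hu.fderiv_apply ℝ (Pi.single i 1)

lemma pd3_contDiff {u : (Fin 3 → ℝ) → ℝ} (hu : ContDiff ℝ 2 u) (j : Fin 3) :
    ContDiff ℝ 1 (pd3 u j) :=
  (hu.fderiv_right (by norm_num)).clm_apply contDiff_const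

lemma cs_integrable {u : (Fin 3 → ℝ) → ℝ} (hc : Continuous u) (hs : HasCompactSupport u) :
    Integrable u := hc.integrable_of_hasCompactSupport hs

lemma ibp (u v : (Fin 3 → ℝ) → ℝ) (hu : ContDiff ℝ 1 u) (huc : HasCompactSupport u)
    (hv : ContDiff ℝ 2 v) (hvc : HasCompactSupport v) (i j : Fin 3) :
    ∫ x, u x * pd3 (pd3 v j) i x = - ∫ x, pd3 u i x * pd3 v j x := by
  have hvj : ContDiff ℝ 1 (pd3 v j) := pd3_contDiff hv j
  have hvjc : HasCompactSupport (pd3 v j) := pd3_cs hvc j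
  exact integral_mul_fderiv_eq_neg_fderiv_mul_of_integrable
    (cs_integrable ((pd3_cont hu i).mul hvj.continuous) ((pd3_cs huc i).mul_right))
    (cs_integrable (hu.continuous.mul (pd3_cont hvj i)) ((pd3_cs hvjc i).mul_left))
    (cs_integrable (hu.continuous.mul hvj.continuous) (hvjc.mul_left))
    (fun x _ => hu.differentiable one_ne_zero x) (fun x _ => hvj.differentiable one_ne_zero x)

lemma int_mul_divEgrad (E : Matrix (Fin 3) (Fin 3) ℝ) (φ ψ : (Fin 3 → ℝ) → ℝ)
    (hφ : ContDiff ℝ 2 φ) (hφc : HasCompactSupport φ)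
    (hψ : ContDiff ℝ 2 ψ) (hψc : HasCompactSupport ψ) :
    ∫ x, φ x * divEgrad E ψ x = - ∫ x, ∑ i, ∑ j, E i j * (pd3 φ i x * pd3 ψ j x) := by
  have hint1 : ∀ i j : Fin 3, Integrable (fun x => E i j * (φ x * pd3 (pd3 ψ j) i x)) :=
    fun i j => (cs_integrable (hφ.continuous.mul (pd3_cont (pd3_contDiff hψ j) i))
      ((pd3_cs (pd3_cs hψc j) i).mul_left)).const_mul _
  have hint2 : ∀ i j : Fin 3, Integrable (fun x => E i j * (pd3 φ i x * pd3 ψ j x)) :=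
    fun i j => (cs_integrable ((pd3_cont (hφ.of_le (by norm_num)) i).mul
      (pd3_cont (pd3_contDiff hψ j) i |>.comp continuous_id |> fun _ => (pd3_contDiff hψ j).continuous))
      ((pd3_cs hφc i).mul_right)).const_mul _
  have h0 : ∀ x, φ x * divEgrad E ψ x = ∑ i, ∑ j, E i j * (φ x * pd3 (pd3 ψ j) i x) := by
    intro x
    simp only [divEgrad, Finset.mul_sum]
    exact Finset.sum_congr rfl fun i _ => Finset.sum_congr rfl fun j _ => by ring
  calc ∫ x, φ x * divEgrad E ψ x
      = ∫ x, ∑ i, ∑ j, E i j * (φ x * pd3 (pd3 ψ j) i x) := by simp only [h0]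
    _ = ∑ i, ∑ j, ∫ x, E i j * (φ x * pd3 (pd3 ψ j) i x) := by
        rw [integral_finset_sum _ (fun i _ => integrable_finset_sum _ (fun j _ => hint1 i j))]
        exact Finset.sum_congr rfl fun i _ => integral_finset_sum _ (fun j _ => hint1 i j)
    _ = ∑ i, ∑ j, (- ∫ x, E i j * (pd3 φ i x * pd3 ψ j x)) := by
        refine Finset.sum_congr rfl fun i _ => Finset.sum_congr rfl fun j _ => ?_
        rw [integral_const_mul, integral_const_mul,
          ibp φ ψ (hφ.of_le (by norm_num)) hφc hψ hψc i j]
        ring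
    _ = - ∑ i, ∑ j, ∫ x, E i j * (pd3 φ i x * pd3 ψ j x) := by
        simp [Finset.sum_neg_distrib]
    _ = - ∫ x, ∑ i, ∑ j, E i j * (pd3 φ i x * pd3 ψ j x) := by
        rw [integral_finset_sum _ (fun i _ => integrable_finset_sum _ (fun j _ => hint2 i j))]
        congr 1
        exact Finset.sum_congr rfl fun i _ => (integral_finset_sum _ (fun j _ => hint2 i j)).symm

lemma quad_eq (E : Matrix (Fin 3) (Fin 3) ℝ) (X : Fin 3 → ℝ) :
    X ⬝ᵥ E.mulVec X = ∑ i, ∑ j, E i j * (X i * X j) := by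
  simp only [dotProduct, Matrix.mulVec, Finset.mul_sum]
  exact Finset.sum_congr rfl fun i _ => Finset.sum_congr rfl fun j _ => by ring

set_option maxHeartbeats 1000000 in
theorem stmt3 (E : Matrix (Fin 3) (Fin 3) ℝ) (Emin : ℝ) (hEmin : 0 < Emin)
    (hE : ∀ X : Fin 3 → ℝ, Emin * ∑ i, X i ^ 2 ≤ X ⬝ᵥ E.mulVec X)
    (α β ε : ℝ) (hα : 0 < α) (hβ : 0 < β) (hε : 0 < ε)
    (f : (Fin 3 → ℝ) → ℝ) (hfc : Continuous f) (hf2 : MemLp f 2 volume)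
    (φt φc : (Fin 3 → ℝ) → ℝ)
    (hφt : ContDiff ℝ 2 φt) (hφtc : HasCompactSupport φt)
    (hφc : ContDiff ℝ 2 φc) (hφcc : HasCompactSupport φc)
    (heqt : ∀ x, -divEgrad E φt x + α ^ 2 / ε ^ 2 * (φt x - φc x) = -(α ^ 2 / ε ^ 2) * f x)
    (heqc : ∀ x, -divEgrad E φc x - β ^ 2 / ε ^ 2 * (φt x - φc x) = β ^ 2 / ε ^ 2 * f x) :
    β ^ 2 * Emin * (∫ x, ∑ i, (pd3 φt i x) ^ 2) +
      α ^ 2 * Emin * (∫ x, ∑ i, (pd3 φc i x) ^ 2) ≤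
      α ^ 2 * β ^ 2 / ε ^ 2 * ∫ x, (f x) ^ 2 := by
  set k := α ^ 2 / ε ^ 2 with hk
  set l := β ^ 2 / ε ^ 2 with hl
  set c := α ^ 2 * β ^ 2 / ε ^ 2 with hc
  set g : (Fin 3 → ℝ) → ℝ := fun x => φt x - φc x with hg
  have hgc : Continuous g := hφt.continuous.sub hφc.continuous
  have hgcs : HasCompactSupport g := by
    refine HasCompactSupport.intro (hφtc.union hφcc) (fun x hx => ?_)
    simp only [Set.mem_union, not_or] at hx
    rw [hg]
    simp [image_eq_zero_of_notMem_tsupport hx.1, image_eq_zero_of_notMem_tsupport hx.2]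
  -- basic continuity/support facts
  have hpd1t : ContDiff ℝ 1 φt := hφt.of_le (by norm_num)
  have hpd1c : ContDiff ℝ 1 φc := hφc.of_le (by norm_num)
  -- integrability of various products
  have int_tg : Integrable (fun x => φt x * g x) :=
    cs_integrable (hφt.continuous.mul hgc) hφtc.mul_right
  have int_cg : Integrable (fun x => φc x * g x) :=
    cs_integrable (hφc.continuous.mul hgc) hφcc.mul_right
  have int_tf : Integrable (fun x => φt x * f x) :=
    cs_integrable (hφt.continuous.mul hfc) hφtc.mul_right
  have int_cf : Integrable (fun x => φc x * f x) :=
    cs_integrable (hφc.continuous.mul hfc) hφcc.mul_right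
  have int_gg : Integrable (fun x => g x ^ 2) := by
    have : Integrable (fun x => g x * g x) := cs_integrable (hgc.mul hgc) hgcs.mul_right
    simpa [sq] using this
  have int_gf : Integrable (fun x => g x * f x) :=
    cs_integrable (hgc.mul hfc) hgcs.mul_right
  have int_ff : Integrable (fun x => f x ^ 2) := by
    have := hf2.integrable_sq
    simpa [sq] using this
  -- abbreviations for integrals
  set It := ∫ x, φt x * g x with hIt
  set Ic := ∫ x, φc x * g x with hIc
  set Ft := ∫ x, φt x * f x with hFt
  set Fc := ∫ x, φc x * f x with hFc
  set G := ∫ x, g x ^ 2 with hG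
  set F := ∫ x, (f x) ^ 2 with hF
  set GF := ∫ x, g x * f x with hGF
  -- quadratic forms
  set Qt := ∫ x, ∑ i, ∑ j, E i j * (pd3 φt i x * pd3 φt j x) with hQt
  set Qc := ∫ x, ∑ i, ∑ j, E i j * (pd3 φc i x * pd3 φc j x) with hQc
  -- coercivity
  have coercive : ∀ (φ : (Fin 3 → ℝ) → ℝ), ContDiff ℝ 2 φ → HasCompactSupport φ →
      Emin * (∫ x, ∑ i, (pd3 φ i x) ^ 2) ≤
        ∫ x, ∑ i, ∑ j, E i j * (pd3 φ i x * pd3 φ j x) := by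
    intro φ hφ hφcs
    have h1 : ContDiff ℝ 1 φ := hφ.of_le (by norm_num)
    have intsq : Integrable (fun x => ∑ i, (pd3 φ i x) ^ 2) := by
      refine integrable_finset_sum _ (fun i _ => ?_)
      have : Integrable (fun x => pd3 φ i x * pd3 φ i x) :=
        cs_integrable ((pd3_cont h1 i).mul (pd3_cont h1 i)) (pd3_cs hφcs i).mul_right
      simpa [sq] using this
    have intq : Integrable (fun x => ∑ i, ∑ j, E i j * (pd3 φ i x * pd3 φ j x)) := by
      refine integrable_finset_sum _ (fun i _ => integrable_finset_sum _ (fun j _ => ?_))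
      exact (cs_integrable ((pd3_cont h1 i).mul (pd3_cont h1 j))
        (pd3_cs hφcs i).mul_right).const_mul _
    rw [← integral_const_mul]
    refine integral_mono (intsq.const_mul _) intq (fun x => ?_)
    have := hE (fun i => pd3 φ i x)
    rw [quad_eq] at this
    simpa using this
  have cA := coercive φt hφt hφtc
  have cB := coercive φc hφc hφcc
  -- weak formulations
  have eqt : Qt = -(k * It + k * Ft) := by
    have h1 : ∫ x, φt x * divEgrad E φt x = -Qt :=
      int_mul_divEgrad E φt φt hφt hφtc hφt hφtc
    have h2 : ∀ x, φt x * divEgrad E φt x = k * (φt x * g x) + k * (φt x * f x) := by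
      intro x
      have := heqt x
      have hD : divEgrad E φt x = k * g x + k * f x := by rw [hg]; dsimp only; linarith
      rw [hD]; ring
    have h3 : ∫ x, φt x * divEgrad E φt x = k * It + k * Ft := by
      simp only [h2]
      rw [integral_add (int_tg.const_mul _) (int_tf.const_mul _),
        integral_const_mul, integral_const_mul]
    linarith [h1, h3]
  have eqc : Qc = l * Ic + l * Fc := by
    have h1 : ∫ x, φc x * divEgrad E φc x = -Qc :=
      int_mul_divEgrad E φc φc hφc hφcc hφc hφcc
    have h2 : ∀ x, φc x * divEgrad E φc x = -(l * (φc x * g x) + l * (φc x * f x)) := by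
      intro x
      have := heqc x
      have hD : divEgrad E φc x = -(l * g x) - l * f x := by rw [hg]; dsimp only; linarith
      rw [hD]; ring
    have h3 : ∫ x, φc x * divEgrad E φc x = -(l * Ic + l * Fc) := by
      simp only [h2]
      rw [integral_neg, integral_add (int_cg.const_mul l) (int_cf.const_mul l),
        integral_const_mul, integral_const_mul]
    linarith [h1, h3]
  -- differences of integrals
  have hdiff1 : It - Ic = G := by
    rw [hIt, hIc, hG, ← integral_sub int_tg int_cg]
    congr 1; funext x; rw [hg]; ring
  have hdiff2 : Ft - Fc = GF := by
    rw [hFt, hFc, hGF, ← integral_sub int_tf int_cf]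
    congr 1; funext x; rw [hg]; ring
  -- Young inequality
  have hGnn : 0 ≤ G := integral_nonneg (fun x => sq_nonneg _)
  have hFnn : 0 ≤ F := integral_nonneg (fun x => sq_nonneg _)
  have young : -GF ≤ (G + F) / 2 := by
    have h0 : 0 ≤ ∫ x, (g x + f x) ^ 2 := integral_nonneg (fun x => sq_nonneg _)
    have hsplit : (∫ x, (g x + f x) ^ 2) = G + (2 * GF + F) := by
      have hfun : ∀ x, (g x + f x) ^ 2 = g x ^ 2 + (2 * (g x * f x) + f x ^ 2) := by
        intro x; ring
      have i2 : Integrable (fun x => 2 * (g x * f x) + f x ^ 2) :=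
        (int_gf.const_mul 2).add int_ff
      simp only [hfun]
      rw [integral_add int_gg i2, integral_add (int_gf.const_mul 2) int_ff, integral_const_mul]
    linarith [h0, hsplit.symm.le]
  -- positivity relations
  have hcpos : 0 < c := by rw [hc]; positivity
  have hbk : β ^ 2 * k = c := by rw [hk, hc]; ring
  have hal : α ^ 2 * l = c := by rw [hl, hc]; ring
  have hQsum : β ^ 2 * Qt + α ^ 2 * Qc ≤ c * F := by
    have h1 : β ^ 2 * Qt + α ^ 2 * Qc = -(c * G) - c * GF := by
      rw [eqt, eqc]
      have : β ^ 2 * -(k * It + k * Ft) + α ^ 2 * (l * Ic + l * Fc)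
          = -((β ^ 2 * k) * (It - Ic)) - (β ^ 2 * k) * (Ft - Fc)
            + (α ^ 2 * l - β ^ 2 * k) * (Ic + Fc) := by ring
      rw [this, hbk, hal, hdiff1, hdiff2]
      ring
    have h2 : - (c * GF) ≤ c * ((G + F) / 2) :=
      by
        have := mul_le_mul_of_nonneg_left young hcpos.le
        linarith [this]
    nlinarith [mul_nonneg hcpos.le hGnn, mul_nonneg hcpos.le hFnn]
  have hb2 : (0:ℝ) ≤ β ^ 2 := sq_nonneg β
  have ha2 : (0:ℝ) ≤ α ^ 2 := sq_nonneg α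
  have h1 := mul_le_mul_of_nonneg_left cA hb2
  have h2 := mul_le_mul_of_nonneg_left cB ha2
  calc β ^ 2 * Emin * (∫ x, ∑ i, (pd3 φt i x) ^ 2) +
        α ^ 2 * Emin * (∫ x, ∑ i, (pd3 φc i x) ^ 2)
      ≤ β ^ 2 * Qt + α ^ 2 * Qc := by nlinarith [h1, h2]
    _ ≤ c * F := hQsum
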